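/- Let X be a T₁ topological space such that every lower semicontinuous map φ : X → Set ℝ, whose values are each either a nonempty compact interval or all of ℝ, admits a continuous selection. Then X is normal. -/
import Mathlib


/-- Converse: if every LSC map into ℝ with values either a nonempty compact
interval or all of ℝ admits a continuous selection, then X is normal. -/
theorem normal_of_selection_property
    {X : Type*} [TopologicalSpace X] [T1Space X]
    (hsel : ∀ φ : X → Set ℝ,
      (∀ U : Set ℝ, IsOpen U → IsOpen {x | (φ x ∩ U).Nonempty}) →
      (∀ x, (∃ a b : ℝ, a ≤ b ∧ φ x = Set.Icc a b) ∨ φ x = Set.univ) →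
      ∃ f : X → ℝ, Continuous f ∧ ∀ x, f x ∈ φ x) :
    NormalSpace X := by
  constructor
  intro s t hs ht hst
  classical
  set φ : X → Set ℝ := fun x =>
    if x ∈ s then {0} else if x ∈ t then {1} else Set.Icc 0 1 with hφ
  have hmem : ∀ x, φ x ⊆ Set.Icc (0:ℝ) 1 := by
    intro x
    simp only [hφ]
    split_ifs with h1 h2
    · simp
    · simp
    · exact le_refl _
  have hlsc : ∀ U : Set ℝ, IsOpen U → IsOpen {x | (φ x ∩ U).Nonempty} := by
    intro U hU
    by_cases hI : (Set.Icc (0:ℝ) 1 ∩ U).Nonempty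
    · by_cases h0 : (0:ℝ) ∈ U <;> by_cases h1 : (1:ℝ) ∈ U
      · have : {x | (φ x ∩ U).Nonempty} = Set.univ := by
          ext x
          simp only [Set.mem_setOf_eq, Set.mem_univ, iff_true, hφ]
          split_ifs with hx1 hx2
          · exact ⟨0, rfl, h0⟩
          · exact ⟨1, rfl, h1⟩
          · exact hI
        rw [this]; exact isOpen_univ
      · have : {x | (φ x ∩ U).Nonempty} = tᶜ := by
          ext x
          simp only [Set.mem_setOf_eq, Set.mem_compl_iff, hφ]
          split_ifs with hx1 hx2
          · simp only [Set.singleton_inter_nonempty]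
            exact ⟨fun _ => fun hxt => hst.le_bot ⟨hx1, hxt⟩, fun _ => h0⟩
          · simp only [Set.singleton_inter_nonempty]
            exact ⟨fun h => absurd h h1, fun h => absurd hx2 h⟩
          · exact ⟨fun _ => hx2, fun _ => hI⟩
        rw [this]; exact ht.isOpen_compl
      · have : {x | (φ x ∩ U).Nonempty} = sᶜ := by
          ext x
          simp only [Set.mem_setOf_eq, Set.mem_compl_iff, hφ]
          split_ifs with hx1 hx2
          · simp only [Set.singleton_inter_nonempty]
            exact ⟨fun h => absurd h h0, fun h => absurd hx1 h⟩
          · simp only [Set.singleton_inter_nonempty]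
            exact ⟨fun _ => fun hxs => absurd hx2 (hst.le_bot ⟨hxs, hx2⟩).elim, fun _ => h1⟩
          · exact ⟨fun _ => hx1, fun _ => hI⟩
        rw [this]; exact hs.isOpen_compl
      · have : {x | (φ x ∩ U).Nonempty} = (s ∪ t)ᶜ := by
          ext x
          simp only [Set.mem_setOf_eq, Set.mem_compl_iff, Set.mem_union, hφ]
          split_ifs with hx1 hx2
          · simp only [Set.singleton_inter_nonempty]
            exact ⟨fun h => absurd h h0, fun h => absurd (Or.inl hx1) h⟩
          · simp only [Set.singleton_inter_nonempty]
            exact ⟨fun h => absurd h h1, fun h => absurd (Or.inr hx2) h⟩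
          · exact ⟨fun _ => by tauto, fun _ => hI⟩
        rw [this]
        exact (hs.union ht).isOpen_compl
    · have : {x | (φ x ∩ U).Nonempty} = ∅ := by
        ext x
        simp only [Set.mem_setOf_eq, Set.mem_empty_iff_false, iff_false]
        intro ⟨y, hy1, hy2⟩
        exact hI ⟨y, hmem x hy1, hy2⟩
      rw [this]; exact isOpen_empty
  have hconv : ∀ x, (∃ a b : ℝ, a ≤ b ∧ φ x = Set.Icc a b) ∨ φ x = Set.univ := by
    intro x
    left
    simp only [hφ]
    split_ifs
    · exact ⟨0, 0, le_refl _, (Set.Icc_self 0).symm⟩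
    · exact ⟨1, 1, le_refl _, (Set.Icc_self 1).symm⟩
    · exact ⟨0, 1, zero_le_one, rfl⟩
  obtain ⟨f, hf, hfsel⟩ := hsel φ hlsc hconv
  have hfs : ∀ x ∈ s, f x = 0 := by
    intro x hx
    have := hfsel x
    simp only [hφ, if_pos hx] at this
    exact this
  have hft : ∀ x ∈ t, f x = 1 := by
    intro x hx
    have hxs : x ∉ s := fun hxs => hst.le_bot ⟨hxs, hx⟩
    have := hfsel x
    simp only [hφ, if_neg hxs, if_pos hx] at this
    exact this
  refine ⟨f ⁻¹' Set.Iio (1/2), f ⁻¹' Set.Ioi (1/2), ?_, ?_, ?_, ?_, ?_⟩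
  · exact isOpen_Iio.preimage hf
  · exact isOpen_Ioi.preimage hf
  · intro x hx
    simp only [Set.mem_preimage, Set.mem_Iio, hfs x hx]
    norm_num
  · intro x hx
    simp only [Set.mem_preimage, Set.mem_Ioi, hft x hx]
    norm_num
  · rw [Set.disjoint_left]
    intro x hx1 hx2
    simp only [Set.mem_preimage, Set.mem_Iio, Set.mem_Ioi] at hx1 hx2
    exact absurd hx2 (not_lt.mpr hx1.le)
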